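/- Let k be a field of characteristic zero, A = k[X₀,X₁,X₂] the polynomial ring in three variables over k, I ⊆ A an ideal, R = A/I, and π : A → R the quotient map. Suppose τ̃ is a k-derivation of A with τ̃(I) ⊆ I, and let τ be the induced k-derivation of R (i.e. τ(π(a)) = π(τ̃(a)) for all a ∈ A). Assume that the map R → Der_k(R), r ↦ r·τ, is bijective, and that Der_k(R) is a simple Lie algebra over k. Then for every D ∈ Der_k(R) there exist f, g, h ∈ R such that D = ⁅τ, f·τ⁆ + ⁅π(X₁)·τ, g·τ⁆ + ⁅π(X₂)·τ, h·τ⁆. -/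

import Mathlib

set_option synthInstance.maxHeartbeats 1000000
set_option maxHeartbeats 2000000

open MvPolynomial

private lemma pderiv0_surj (k : Type*) [Field k] [CharZero k]
    (H : MvPolynomial (Fin 3) k) : ∃ F, pderiv (0 : Fin 3) F = H := by
  induction H using MvPolynomial.induction_on' with
  | monomial u c =>
    refine ⟨monomial (u + Finsupp.single (0 : Fin 3) (1 : ℕ)) (c / ((u 0 : k) + 1)), ?_⟩
    rw [pderiv_monomial]
    have h1 : (u + Finsupp.single (0 : Fin 3) (1 : ℕ)) - Finsupp.single 0 1 = u := by
      ext i; simp [Finsupp.single_apply]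
    have h2 : (u + Finsupp.single (0 : Fin 3) (1 : ℕ)) 0 = u 0 + 1 := by simp
    rw [h1, h2]
    congr 1
    have h3 : ((u 0 : k) + 1) ≠ 0 := Nat.cast_add_one_ne_zero (u 0)
    push_cast
    field_simp
  | add p q hp hq =>
    obtain ⟨F, hF⟩ := hp; obtain ⟨G, hG⟩ := hq
    exact ⟨F + G, by rw [map_add, hF, hG]⟩

private def phi (k : Type*) [CommRing k] (R : Type*) [CommRing R] [Algebra k R]
    (τ : Derivation k R R) : R →ₗ[k] Derivation k R R where
  toFun r := r • τ
  map_add' a b := add_smul a b τ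
  map_smul' c a := smul_assoc c a τ

private theorem main_decomp (k : Type*) [Field k] [CharZero k]
    (R : Type*) [CommRing R] [Algebra k R]
    (τ : Derivation k R R) (x0 x1 x2 : R)
    (hdec : ∀ r : R, ∃ p0 p1 p2 : R, τ r = p0 * τ x0 + p1 * τ x1 + p2 * τ x2)
    (hint : τ x1 = 0 → τ x2 = 0 → ∀ r : R, ∃ f : R, τ f = r * τ x0)
    (hbij : Function.Bijective (fun r : R => r • τ))
    (hsimple : LieAlgebra.IsSimple k (Derivation k R R))
    (D : Derivation k R R) :
    ∃ f g h : R, D = ⁅τ, f • τ⁆ + ⁅x1 • τ, g • τ⁆ + ⁅x2 • τ, h • τ⁆ := by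
  classical
  have hL : ∀ x : Derivation k R R, ∃ c : R, c • τ = x := hbij.2
  have hinj : ∀ a b : R, a • τ = b • τ → a = b := fun a b h => hbij.1 h
  have hφ : ∀ r : R, phi k R τ r = r • τ := fun r => rfl
  have hbra : ∀ a b : R, ⁅a • τ, b • τ⁆ = (a * τ b - b * τ a) • τ := by
    intro a b
    ext r
    simp only [Derivation.commutator_apply, Derivation.smul_apply, smul_eq_mul,
      Derivation.leibniz]
    ring
  have hbra1 : ∀ f : R, ⁅τ, f • τ⁆ = (τ f) • τ := by
    intro f
    have h := hbra 1 f
    rw [one_smul] at h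
    rw [h, Derivation.map_one_eq_zero]
    ring_nf
  by_cases hdeg : τ x1 = 0 ∧ τ x2 = 0
  · -- degenerate case
    obtain ⟨h1z, h2z⟩ := hdeg
    have hd0 : ∀ r : R, ∃ p0 : R, τ r = p0 * τ x0 := by
      intro r
      obtain ⟨p0, p1, p2, hp⟩ := hdec r
      rw [h1z, h2z, mul_zero, mul_zero, add_zero, add_zero] at hp
      exact ⟨p0, hp⟩
    by_cases ht0 : τ x0 = 0
    · exfalso
      apply hsimple.non_abelian
      have hτ0 : τ = 0 := by
        ext r
        obtain ⟨p0, hp⟩ := hd0 r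
        rw [hp, ht0, mul_zero]
        rfl
      constructor
      intro x y
      obtain ⟨c, rfl⟩ := hL x
      simp [hτ0]
    · have hτmem : ∀ r : R, τ r ∈ Ideal.span {τ x0} := by
        intro r
        obtain ⟨p0, hp⟩ := hd0 r
        rw [hp]
        exact Ideal.mem_span_singleton'.mpr ⟨p0, rfl⟩
      have hlie : ∀ (x m : Derivation k R R),
          m ∈ Submodule.map (phi k R τ) (Submodule.restrictScalars k (Ideal.span {τ x0})) →
          ⁅x, m⁆ ∈ Submodule.map (phi k R τ)
            (Submodule.restrictScalars k (Ideal.span {τ x0})) := by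
        intro x m hm
        obtain ⟨w, hw, rfl⟩ := hm
        obtain ⟨c, rfl⟩ := hL x
        rw [hφ, hbra]
        refine ⟨c * τ w - w * τ c, ?_, rfl⟩
        exact sub_mem (Ideal.mul_mem_left _ c (hτmem w)) (Ideal.mul_mem_right _ _ hw)
      let Wι : LieIdeal k (Derivation k R R) :=
        ⟨Submodule.map (phi k R τ) (Submodule.restrictScalars k (Ideal.span {τ x0})),
          fun {x m} hm => hlie x m hm⟩
      rcases hsimple.eq_bot_or_eq_top Wι with hbot | htop
      · exfalso
        apply ht0
        have hmem : phi k R τ (τ x0) ∈ Wι :=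
          ⟨τ x0, Ideal.subset_span rfl, rfl⟩
        rw [hbot] at hmem
        have h0 : phi k R τ (τ x0) = 0 := (LieSubmodule.mem_bot _).mp hmem
        apply hinj _ 0
        rw [← hφ (τ x0), h0, zero_smul]
      · obtain ⟨d, hd⟩ := hL D
        have hDmem : D ∈ Wι := by rw [htop]; exact LieSubmodule.mem_top D
        obtain ⟨v, hv, hveq⟩ := hDmem
        have hdv : d ∈ Ideal.span {τ x0} := by
          have hvd : v = d := hinj v d (by rw [← hφ v, hveq, hd])
          rwa [← hvd]
        obtain ⟨r, hr⟩ := Ideal.mem_span_singleton'.mp hdv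
        obtain ⟨f, hf⟩ := hint h1z h2z r
        refine ⟨f, 0, 0, ?_⟩
        rw [← hd, hbra1, zero_smul, lie_zero, lie_zero, add_zero, add_zero, hf, hr]
  · -- non-degenerate case
    let τL : Module.End k R := Derivation.toLinearMap τ
    have hτLapp : ∀ r : R, τL r = τ r := fun r => rfl
    let J : Ideal R := Ideal.span {τ x1, τ x2}
    let V : Submodule k R :=
      ⨆ n : ℕ, Submodule.map (τL ^ n) (Submodule.restrictScalars k J)
    have hmemV : ∀ (n : ℕ) (j : R), j ∈ J → (τL ^ n) j ∈ V := by
      intro n j hj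
      exact le_iSup (fun n : ℕ => Submodule.map (τL ^ n) (Submodule.restrictScalars k J)) n
        ⟨j, hj, rfl⟩
    have hJV : ∀ j ∈ J, j ∈ V := by
      intro j hj
      have h := hmemV 0 j hj
      rwa [pow_zero, Module.End.one_apply] at h
    have hτV : ∀ v ∈ V, τ v ∈ V := by
      have hle : V ≤ Submodule.comap τL V := by
        refine iSup_le fun n => ?_
        rintro x ⟨j, hj, rfl⟩
        have he : τL ((τL ^ n) j) = (τL ^ (n + 1)) j := by
          rw [pow_succ']
          rfl
        simp only [Submodule.mem_comap, he]
        exact hmemV (n + 1) j hj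
      intro v hv
      rw [← hτLapp]
      exact hle hv
    have hRV0 : ∀ (n : ℕ) (j : R), j ∈ J → ∀ r : R, r * (τL ^ n) j ∈ V := by
      intro n
      induction n with
      | zero =>
        intro j hj r
        rw [pow_zero, Module.End.one_apply]
        exact hJV _ (Ideal.mul_mem_left _ r hj)
      | succ n ih =>
        intro j hj r
        have hkey : r * (τL ^ (n + 1)) j
            = τ (r * (τL ^ n) j) - (τ r) * (τL ^ n) j := by
          have h1 : (τL ^ (n + 1)) j = τ ((τL ^ n) j) := by
            rw [pow_succ']
            rfl
          rw [h1, Derivation.leibniz, smul_eq_mul, smul_eq_mul]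
          ring
        rw [hkey]
        exact sub_mem (hτV _ (ih j hj r)) (ih j hj (τ r))
    have hRV : ∀ v ∈ V, ∀ r : R, r * v ∈ V := by
      let V' : Submodule k R :=
        { carrier := {x : R | ∀ r : R, r * x ∈ V}
          add_mem' := fun hx hy r => by
            rw [mul_add]; exact add_mem (hx r) (hy r)
          zero_mem' := fun r => by rw [mul_zero]; exact zero_mem V
          smul_mem' := fun c x hx r => by
            rw [mul_smul_comm]; exact Submodule.smul_mem V c (hx r) }
      have hle : V ≤ V' := by
        refine iSup_le fun n => ?_
        rintro x ⟨j, hj, rfl⟩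
        exact hRV0 n j hj
      exact fun v hv r => hle hv r
    have hVsub : ∀ v ∈ V, ∃ j ∈ J, ∃ f0 : R, j + τ f0 = v := by
      intro v hv
      have hle : V ≤ Submodule.restrictScalars k J ⊔ LinearMap.range τL := by
        refine iSup_le fun n => ?_
        rintro x ⟨j, hj, rfl⟩
        match n with
        | 0 =>
          rw [pow_zero, Module.End.one_apply]
          exact Submodule.mem_sup_left hj
        | Nat.succ m =>
          have he : (τL ^ (m + 1)) j = τL ((τL ^ m) j) := by
            rw [pow_succ']
            rfl
          rw [he]
          exact Submodule.mem_sup_right ⟨(τL ^ m) j, rfl⟩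
      obtain ⟨j, hj, y, hy, hsum⟩ := Submodule.mem_sup.mp (hle hv)
      obtain ⟨f0, hf0⟩ := hy
      exact ⟨j, hj, f0, by rw [← hsum, ← hf0]; rfl⟩
    have hlie : ∀ (x m : Derivation k R R),
        m ∈ Submodule.map (phi k R τ) V →
        ⁅x, m⁆ ∈ Submodule.map (phi k R τ) V := by
      intro x m hm
      obtain ⟨v, hv, rfl⟩ := hm
      obtain ⟨c, rfl⟩ := hL x
      rw [hφ, hbra]
      refine ⟨c * τ v - v * τ c, ?_, rfl⟩
      refine sub_mem (hRV _ (hτV v hv) c) ?_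
      rw [mul_comm]
      exact hRV v hv (τ c)
    let Vι : LieIdeal k (Derivation k R R) :=
      ⟨Submodule.map (phi k R τ) V, fun {x m} hm => hlie x m hm⟩
    rcases hsimple.eq_bot_or_eq_top Vι with hbot | htop
    · exfalso
      apply hdeg
      constructor
      · have hmem : phi k R τ (τ x1) ∈ Vι :=
          ⟨τ x1, hJV _ (Ideal.subset_span (Set.mem_insert _ _)), rfl⟩
        rw [hbot] at hmem
        have h0 : phi k R τ (τ x1) = 0 := (LieSubmodule.mem_bot _).mp hmem
        apply hinj _ 0
        rw [← hφ (τ x1), h0, zero_smul]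
      · have hmem : phi k R τ (τ x2) ∈ Vι :=
          ⟨τ x2, hJV _ (Ideal.subset_span (Set.mem_insert_of_mem _ rfl)), rfl⟩
        rw [hbot] at hmem
        have h0 : phi k R τ (τ x2) = 0 := (LieSubmodule.mem_bot _).mp hmem
        apply hinj _ 0
        rw [← hφ (τ x2), h0, zero_smul]
    · obtain ⟨d, hd⟩ := hL D
      have hDmem : D ∈ Vι := by rw [htop]; exact LieSubmodule.mem_top D
      obtain ⟨v, hv, hveq⟩ := hDmem
      have hdV : d ∈ V := by
        have hvd : v = d := hinj v d (by rw [← hφ v, hveq, hd])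
        rwa [← hvd]
      obtain ⟨j, hj, f0, hsum⟩ := hVsub d hdV
      obtain ⟨a, b, hab⟩ := Ideal.mem_span_pair.mp hj
      have ha2 : (2⁻¹ : k) • a + (2⁻¹ : k) • a = a := by
        rw [← add_smul]
        norm_num
      have hb2 : (2⁻¹ : k) • b + (2⁻¹ : k) • b = b := by
        rw [← add_smul]
        norm_num
      refine ⟨f0 + x1 * ((2⁻¹ : k) • a) + x2 * ((2⁻¹ : k) • b),
        -((2⁻¹ : k) • a), -((2⁻¹ : k) • b), ?_⟩
      rw [← hd, hbra1, hbra, hbra]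
      have hw : τ (f0 + x1 * ((2⁻¹ : k) • a) + x2 * ((2⁻¹ : k) • b))
          + (x1 * τ (-((2⁻¹ : k) • a)) - (-((2⁻¹ : k) • a)) * τ x1)
          + (x2 * τ (-((2⁻¹ : k) • b)) - (-((2⁻¹ : k) • b)) * τ x2) = d := by
        rw [map_add, map_add, Derivation.leibniz, Derivation.leibniz, map_neg, map_neg,
          smul_eq_mul, smul_eq_mul, smul_eq_mul, smul_eq_mul]
        linear_combination hsum + hab + (τ x1) * ha2 + (τ x2) * hb2
      rw [← hw, add_smul, add_smul]

private lemma quot_decomp (k : Type*) [Field k] [CharZero k]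
    (I : Ideal (MvPolynomial (Fin 3) k))
    (τ : Derivation k (MvPolynomial (Fin 3) k ⧸ I) (MvPolynomial (Fin 3) k ⧸ I))
    (H : MvPolynomial (Fin 3) k) :
    τ (Ideal.Quotient.mk I H)
      = Ideal.Quotient.mk I (pderiv 0 H) * τ (Ideal.Quotient.mk I (X 0))
      + Ideal.Quotient.mk I (pderiv 1 H) * τ (Ideal.Quotient.mk I (X 1))
      + Ideal.Quotient.mk I (pderiv 2 H) * τ (Ideal.Quotient.mk I (X 2)) := by
  have e10 : pderiv (0 : Fin 3) (X (1 : Fin 3) : MvPolynomial (Fin 3) k) = 0 :=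
    pderiv_X_of_ne (by decide)
  have e20 : pderiv (0 : Fin 3) (X (2 : Fin 3) : MvPolynomial (Fin 3) k) = 0 :=
    pderiv_X_of_ne (by decide)
  have e01 : pderiv (1 : Fin 3) (X (0 : Fin 3) : MvPolynomial (Fin 3) k) = 0 :=
    pderiv_X_of_ne (by decide)
  have e21 : pderiv (1 : Fin 3) (X (2 : Fin 3) : MvPolynomial (Fin 3) k) = 0 :=
    pderiv_X_of_ne (by decide)
  have e02 : pderiv (2 : Fin 3) (X (0 : Fin 3) : MvPolynomial (Fin 3) k) = 0 :=
    pderiv_X_of_ne (by decide)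
  have e12 : pderiv (2 : Fin 3) (X (1 : Fin 3) : MvPolynomial (Fin 3) k) = 0 :=
    pderiv_X_of_ne (by decide)
  induction H using MvPolynomial.induction_on with
  | C a =>
    have hca : Ideal.Quotient.mk I (C a) = algebraMap k (MvPolynomial (Fin 3) k ⧸ I) a := by
      rw [show (C a : MvPolynomial (Fin 3) k) = algebraMap k _ a from rfl]
      exact (IsScalarTower.algebraMap_apply k (MvPolynomial (Fin 3) k)
        (MvPolynomial (Fin 3) k ⧸ I) a).symm
    rw [hca, Derivation.map_algebraMap]
    simp
  | add p q hp hq =>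
    simp only [map_add, hp, hq]
    ring
  | mul_X p i hp =>
    rw [map_mul, Derivation.leibniz, smul_eq_mul, smul_eq_mul, hp]
    fin_cases i <;>
      simp only [show ((⟨0, by norm_num⟩ : Fin 3)) = 0 from rfl,
        show ((⟨1, by norm_num⟩ : Fin 3)) = 1 from rfl,
        show ((⟨2, by norm_num⟩ : Fin 3)) = 2 from rfl,
        pderiv_mul, pderiv_X_self, e10, e20, e01, e21, e02, e12,
        mul_one, mul_zero, add_zero, zero_add, map_add, map_mul, map_zero, Fin.isValue] <;>
      ring

/-- Explicit three-bracket decomposition from the proof of Theorem A. -/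
theorem stmt_1 (k : Type*) [Field k] [CharZero k]
    (I : Ideal (MvPolynomial (Fin 3) k))
    (τ' : Derivation k (MvPolynomial (Fin 3) k) (MvPolynomial (Fin 3) k))
    (hτ' : ∀ a ∈ I, τ' a ∈ I)
    (τ : Derivation k (MvPolynomial (Fin 3) k ⧸ I) (MvPolynomial (Fin 3) k ⧸ I))
    (hτ : ∀ a : MvPolynomial (Fin 3) k,
      τ (Ideal.Quotient.mk I a) = Ideal.Quotient.mk I (τ' a))
    (hbij : Function.Bijective
      (fun r : MvPolynomial (Fin 3) k ⧸ I => r • τ))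
    (hsimple : LieAlgebra.IsSimple k
      (Derivation k (MvPolynomial (Fin 3) k ⧸ I) (MvPolynomial (Fin 3) k ⧸ I)))
    (D : Derivation k (MvPolynomial (Fin 3) k ⧸ I) (MvPolynomial (Fin 3) k ⧸ I)) :
    ∃ f g h : MvPolynomial (Fin 3) k ⧸ I,
      D = ⁅τ, f • τ⁆ + ⁅(Ideal.Quotient.mk I (MvPolynomial.X 1)) • τ, g • τ⁆
        + ⁅(Ideal.Quotient.mk I (MvPolynomial.X 2)) • τ, h • τ⁆ := by
  refine main_decomp k (MvPolynomial (Fin 3) k ⧸ I) τ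
    (Ideal.Quotient.mk I (X 0)) (Ideal.Quotient.mk I (X 1)) (Ideal.Quotient.mk I (X 2))
    ?_ ?_ hbij hsimple D
  · intro r
    obtain ⟨H, rfl⟩ : ∃ H, Ideal.Quotient.mk I H = r := Ideal.Quotient.mk_surjective r
    exact ⟨Ideal.Quotient.mk I (pderiv 0 H), Ideal.Quotient.mk I (pderiv 1 H),
      Ideal.Quotient.mk I (pderiv 2 H), quot_decomp k I τ H⟩
  · intro h1 h2 r
    obtain ⟨H, rfl⟩ : ∃ H, Ideal.Quotient.mk I H = r := Ideal.Quotient.mk_surjective r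
    obtain ⟨F, hF⟩ := pderiv0_surj k H
    refine ⟨Ideal.Quotient.mk I F, ?_⟩
    rw [quot_decomp k I τ F, h1, h2, hF]
    ring
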